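/- The function g has exponential decay of variation: there exist constants C > 0 and ρ ∈ (0,1) such that for all y, ỹ ∈ {−1,1}^{ℤ₊} and all n ∈ ℕ, if y_i = ỹ_i for i = 0,…,n−1 then |g(y) − g(ỹ)| ≤ C·ρⁿ. -/

import Mathlib

lemma aux_abs_sinh_le_cosh (x : ℝ) : |Real.sinh x| ≤ Real.cosh x := by
  have h1 := Real.cosh_add_sinh x
  have h2 := Real.cosh_sub_sinh x
  have := Real.exp_pos x
  have := Real.exp_pos (-x)
  rw [abs_le]; constructor <;> linarith

lemma aux_cosh_le (x y : ℝ) : Real.cosh x ≤ Real.cosh y * Real.exp |x - y| := by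
  have h1 : Real.cosh x = Real.cosh y * Real.cosh (x - y) + Real.sinh y * Real.sinh (x - y) := by
    rw [← Real.cosh_add]; ring_nf
  have h2 : Real.exp |x - y| = Real.cosh (x - y) + |Real.sinh (x - y)| := by
    rw [Real.abs_sinh, ← Real.cosh_abs, Real.cosh_add_sinh]
  have h3 : Real.sinh y * Real.sinh (x - y) ≤ |Real.sinh y| * |Real.sinh (x - y)| := by
    rw [← abs_mul]; exact le_abs_self _
  have h4 := aux_abs_sinh_le_cosh y
  have h5 : (0:ℝ) ≤ |Real.sinh (x - y)| := abs_nonneg _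
  have h6 := Real.cosh_pos y
  nlinarith [mul_le_mul_of_nonneg_right h4 h5]

lemma aux_log_cosh_lip (x y : ℝ) : |Real.log (Real.cosh x) - Real.log (Real.cosh y)| ≤ |x - y| := by
  have key : ∀ a b : ℝ, Real.log (Real.cosh a) - Real.log (Real.cosh b) ≤ |a - b| := by
    intro a b
    have h := aux_cosh_le a b
    have h2 : Real.log (Real.cosh a) ≤ Real.log (Real.cosh b * Real.exp |a - b|) :=
      Real.log_le_log (Real.cosh_pos a) h
    rwa [Real.log_mul (ne_of_gt (Real.cosh_pos b)) (Real.exp_ne_zero _), Real.log_exp,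
      ← sub_le_iff_le_add'] at h2
  rw [abs_sub_le_iff]
  exact ⟨key x y, by rw [abs_sub_comm]; exact key y x⟩

lemma aux_exp_lip {x y c : ℝ} (hx : x ≤ c) (hy : y ≤ c) :
    |Real.exp x - Real.exp y| ≤ Real.exp c * |x - y| := by
  have key : ∀ a b : ℝ, a ≤ c → b ≤ c → Real.exp a - Real.exp b ≤ Real.exp c * |a - b| := by
    intro a b ha hb
    rcases le_total a b with h | h
    · have : Real.exp a ≤ Real.exp b := Real.exp_le_exp.2 h
      have : (0:ℝ) ≤ Real.exp c * |a - b| := by positivity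
      linarith
    · have h1 : Real.exp a - Real.exp b = Real.exp a * (1 - Real.exp (b - a)) := by
        rw [mul_sub, mul_one, ← Real.exp_add]; ring_nf
      have h2 : 1 - Real.exp (b - a) ≤ a - b := by
        have := Real.add_one_le_exp (b - a); linarith
      have h3 : Real.exp a ≤ Real.exp c := Real.exp_le_exp.2 ha
      have h4 : (0:ℝ) ≤ a - b := by linarith
      have h5 : Real.exp a * (1 - Real.exp (b - a)) ≤ Real.exp c * (a - b) := by
        have h6 : 0 ≤ 1 - Real.exp (b-a) ∨ 1 - Real.exp (b-a) < 0 := le_or_gt _ _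
        rcases h6 with h6 | h6
        · calc Real.exp a * (1 - Real.exp (b - a)) ≤ Real.exp c * (1 - Real.exp (b-a)) :=
                mul_le_mul_of_nonneg_right h3 h6
            _ ≤ Real.exp c * (a - b) := mul_le_mul_of_nonneg_left h2 (le_of_lt (Real.exp_pos c))
        · have : Real.exp a * (1 - Real.exp (b-a)) < 0 := mul_neg_of_pos_of_neg (Real.exp_pos a) h6
          have : (0:ℝ) ≤ Real.exp c * (a - b) := mul_nonneg (le_of_lt (Real.exp_pos c)) h4
          linarith
      calc Real.exp a - Real.exp b ≤ Real.exp c * (a - b) := by rw [h1]; exact h5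
        _ = Real.exp c * |a - b| := by rw [abs_of_nonneg h4]
  rw [abs_sub_le_iff]
  exact ⟨key x y hx hy, by rw [abs_sub_comm]; exact key y x hy hx⟩

lemma aux_exp_sub_one_le (t : ℝ) (ht : 0 ≤ t) : Real.exp t - 1 ≤ t * Real.exp t := by
  have h := Real.add_one_le_exp (-t)
  have h2 : 1 - t ≤ Real.exp (-t) := by linarith
  have h3 := Real.exp_pos t
  have h4 : Real.exp (-t) * Real.exp t = 1 := by rw [← Real.exp_add]; simp
  nlinarith

lemma aux_cosh_lip (x y : ℝ) : |Real.cosh x - Real.cosh y| ≤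
    Real.cosh y * Real.exp |x - y| * |x - y| := by
  have h1 := aux_cosh_le x y
  have h2 := aux_cosh_le y x
  have hcy := Real.cosh_pos y
  have hcx := Real.cosh_pos x
  have he := Real.exp_pos (|x - y|)
  have habs : (0:ℝ) ≤ |x - y| := abs_nonneg _
  have h3 := aux_exp_sub_one_le |x - y| habs
  rw [abs_le]; constructor
  · -- cosh y - cosh x ≤ ...
    have h5 : Real.cosh y ≤ Real.cosh x * Real.exp |y - x| := h2
    rw [abs_sub_comm] at h5
    have h6 := Real.add_one_le_exp (-|x - y|)
    have h7 : Real.exp (-|x - y|) * Real.exp |x - y| = 1 := by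
      rw [← Real.exp_add]; simp
    have h8 : (1:ℝ) ≤ Real.exp |x - y| := Real.one_le_exp habs
    nlinarith [mul_le_mul_of_nonneg_right h5 (Real.exp_pos (-|x - y|)).le,
      mul_le_mul_of_nonneg_left h6 hcy.le, mul_nonneg (mul_nonneg hcy.le habs) (by linarith : (0:ℝ) ≤ Real.exp |x - y| - 1)]
  · nlinarith

lemma aux_prod_ge (J u : ℝ) :
    Real.cosh J ^ 2 ≤ Real.cosh (u + J) * Real.cosh (u - J) := by
  rw [Real.cosh_add, Real.cosh_sub]
  nlinarith [Real.cosh_sq u, Real.cosh_sq J, Real.sinh_sq u, Real.sinh_sq J,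
    sq_nonneg (Real.sinh u), sq_nonneg (Real.sinh J)]

lemma aux_A_deriv_bound (J u : ℝ) :
    |(1/2 : ℝ) * (Real.sinh (u + J) / Real.cosh (u + J) -
      Real.sinh (u - J) / Real.cosh (u - J))| ≤ Real.tanh |J| := by
  have hcp := Real.cosh_pos (u + J)
  have hcm := Real.cosh_pos (u - J)
  have hcJ := Real.cosh_pos J
  have e1 : Real.sinh (u + J) * Real.cosh (u - J) - Real.cosh (u + J) * Real.sinh (u - J)
      = Real.sinh (2 * J) := by
    rw [← Real.sinh_sub]; ring_nf
  have hd : (1/2 : ℝ) * (Real.sinh (u + J) / Real.cosh (u + J) -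
      Real.sinh (u - J) / Real.cosh (u - J))
      = Real.sinh (2 * J) / (2 * (Real.cosh (u + J) * Real.cosh (u - J))) := by
    rw [← e1]; field_simp
  have htanh : Real.tanh |J| = |Real.sinh J| / Real.cosh J := by
    rw [Real.tanh_eq_sinh_div_cosh, Real.cosh_abs, ← Real.abs_sinh]
  rw [hd, htanh, abs_div, abs_of_pos (by positivity :
    (0:ℝ) < 2 * (Real.cosh (u + J) * Real.cosh (u - J)))]
  rw [div_le_div_iff₀ (by positivity) hcJ]
  have h2 : |Real.sinh (2 * J)| = 2 * |Real.sinh J| * Real.cosh J := by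
    rw [Real.sinh_two_mul, abs_mul, abs_mul, abs_of_pos hcJ]
    norm_num
  rw [h2]
  have h3 := aux_prod_ge J u
  nlinarith [abs_nonneg (Real.sinh J)]

lemma aux_A_hasDeriv (J u : ℝ) :
    HasDerivAt (fun u => (1/2 : ℝ) * Real.log (Real.cosh (u + J) / Real.cosh (u - J)))
      ((1/2 : ℝ) * (Real.sinh (u + J) / Real.cosh (u + J) -
        Real.sinh (u - J) / Real.cosh (u - J))) u := by
  have hfg : (fun u => (1/2 : ℝ) * Real.log (Real.cosh (u + J) / Real.cosh (u - J)))
      = (fun u => (1/2 : ℝ) * (Real.log (Real.cosh (u + J)) - Real.log (Real.cosh (u - J)))) := by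
    funext v
    rw [Real.log_div (ne_of_gt (Real.cosh_pos _)) (ne_of_gt (Real.cosh_pos _))]
  rw [hfg]
  have h1 : HasDerivAt (fun u : ℝ => Real.log (Real.cosh (u + J)))
      (Real.sinh (u + J) * 1 / Real.cosh (u + J)) u :=
    (((hasDerivAt_id u).add_const J).cosh).log (ne_of_gt (Real.cosh_pos _))
  have h2 : HasDerivAt (fun u : ℝ => Real.log (Real.cosh (u - J)))
      (Real.sinh (u - J) * 1 / Real.cosh (u - J)) u :=
    (((hasDerivAt_id u).sub_const J).cosh).log (ne_of_gt (Real.cosh_pos _))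
  have h3 := ((h1.sub h2).const_mul (1/2 : ℝ))
  exact h3.congr_deriv (by ring)

lemma aux_A_lip (J u v : ℝ) :
    |(1/2:ℝ) * Real.log (Real.cosh (u + J) / Real.cosh (u - J)) -
     (1/2:ℝ) * Real.log (Real.cosh (v + J) / Real.cosh (v - J))| ≤ Real.tanh |J| * |u - v| := by
  have := Convex.norm_image_sub_le_of_norm_hasDerivWithin_le
    (f := fun u => (1/2:ℝ) * Real.log (Real.cosh (u + J) / Real.cosh (u - J)))
    (f' := fun x => (1/2:ℝ) * (Real.sinh (x + J) / Real.cosh (x + J) -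
      Real.sinh (x - J) / Real.cosh (x - J)))
    (C := Real.tanh |J|) (s := Set.univ)
    (fun x _ => (aux_A_hasDeriv J x).hasDerivWithinAt)
    (fun x _ => by rw [Real.norm_eq_abs]; exact aux_A_deriv_bound J x)
    convex_univ (Set.mem_univ v) (Set.mem_univ u)
  simpa [Real.norm_eq_abs] using this

lemma aux_A_bd (J u : ℝ) :
    |(1/2:ℝ) * Real.log (Real.cosh (u + J) / Real.cosh (u - J))| ≤ |J| := by
  rw [Real.log_div (ne_of_gt (Real.cosh_pos _)) (ne_of_gt (Real.cosh_pos _))]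
  have h := aux_log_cosh_lip (u + J) (u - J)
  have h2 : |(u + J) - (u - J)| = 2 * |J| := by
    rw [show (u + J) - (u - J) = 2 * J by ring, abs_mul]
    norm_num
  rw [h2] at h
  rw [abs_mul]
  have : |(1/2:ℝ)| = 1/2 := by norm_num
  rw [this]
  linarith

lemma aux_log_cosh_le (t : ℝ) : Real.log (Real.cosh t) ≤ |t| := by
  have h := aux_log_cosh_lip t 0
  simp only [Real.cosh_zero, Real.log_one, sub_zero] at h
  calc Real.log (Real.cosh t) ≤ |Real.log (Real.cosh t)| := le_abs_self _
    _ ≤ |t| := h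

set_option maxHeartbeats 2000000 in
/-- The function `g` has exponential decay of variation: there exist
constants `C > 0` and `ρ ∈ (0,1)` such that for all `y, ỹ ∈ {−1,1}^{ℤ₊}` and all
`n ∈ ℕ`, if `y_i = ỹ_i` for `i = 0,…,n−1` then `|g(y) − g(ỹ)| ≤ C·ρⁿ`.
Here `W y n i = w_i^{(n)}(y)`, `wlim y i = w_i(y)` and
`g(y) = (1/λ)·cosh(w_0(y))·exp(B(w_1(y)))/cosh(w_1(y))`. -/
theorem stmt_14 (p ε : ℝ) (hp0 : 0 < p) (hp1 : p < 1) (hp2 : p ≠ 1 / 2)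
    (hε0 : 0 < ε) (hε1 : ε < 1)
    (J K lam : ℝ)
    (hJ : J = (1 / 2) * Real.log ((1 - p) / p))
    (hK : K = (1 / 2) * Real.log ((1 - ε) / ε))
    (hlam : lam = 4 * Real.cosh J * Real.cosh K)
    (A B : ℝ → ℝ)
    (hA : ∀ u, A u = (1 / 2) * Real.log (Real.cosh (u + J) / Real.cosh (u - J)))
    (hB : ∀ u, B u = (1 / 2) * Real.log (4 * Real.cosh (u + J) * Real.cosh (u - J)))
    (W : (ℕ → ℝ) → ℕ → ℕ → ℝ)
    (hW0 : ∀ (y : ℕ → ℝ) (n i : ℕ), n < i → W y n i = 0)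
    (hWrec : ∀ (y : ℕ → ℝ) (n i : ℕ), i ≤ n → W y n i = K * y i + A (W y n (i + 1)))
    (wlim : (ℕ → ℝ) → ℕ → ℝ)
    (hwlim : ∀ (y : ℕ → ℝ) (i : ℕ),
      Filter.Tendsto (fun n => W y n i) Filter.atTop (nhds (wlim y i)))
    (g : (ℕ → ℝ) → ℝ)
    (hg : ∀ y : ℕ → ℝ,
      g y = (1 / lam) * Real.cosh (wlim y 0) * Real.exp (B (wlim y 1))
              / Real.cosh (wlim y 1)) :
    ∃ C > (0 : ℝ), ∃ ρ ∈ Set.Ioo (0 : ℝ) 1,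
      ∀ y ytil : ℕ → ℝ, (∀ i, y i = 1 ∨ y i = -1) → (∀ i, ytil i = 1 ∨ ytil i = -1) →
        ∀ n : ℕ, (∀ i < n, y i = ytil i) → |g y - g ytil| ≤ C * ρ ^ n := by
  have hcoshJ := Real.cosh_pos J
  have hcoshK := Real.cosh_pos K
  have hlam0 : 0 < lam := by rw [hlam]; positivity
  have hJ0 : J ≠ 0 := by
    rw [hJ]
    intro h
    have hlog : Real.log ((1 - p) / p) = 0 := by linarith
    rcases Real.log_eq_zero.mp hlog with h1 | h1 | h1
    · rw [div_eq_zero_iff] at h1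
      rcases h1 with h1 | h1 <;> linarith
    · have hp0' : p ≠ 0 := ne_of_gt hp0
      rw [div_eq_one_iff_eq hp0'] at h1
      exact hp2 (by linarith)
    · have hpos : (0:ℝ) < (1 - p) / p := div_pos (by linarith) hp0
      linarith
  have hJabs : 0 < |J| := abs_pos.2 hJ0
  obtain ⟨ρ, hρ⟩ : ∃ ρ, ρ = Real.tanh |J| := ⟨_, rfl⟩
  have hρ0 : 0 < ρ := by
    rw [hρ, Real.tanh_eq_sinh_div_cosh]
    exact div_pos (Real.sinh_pos_iff.mpr hJabs) (Real.cosh_pos _)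
  have hρ1 : ρ < 1 := by
    rw [hρ, Real.tanh_eq_sinh_div_cosh, div_lt_one (Real.cosh_pos _)]
    have h1 := Real.cosh_sub_sinh |J|
    have h2 := Real.exp_pos (-|J|)
    linarith
  obtain ⟨R, hR⟩ : ∃ R, R = |K| + |J| := ⟨_, rfl⟩
  have hR0 : 0 < R := hR ▸ add_pos_of_nonneg_of_pos (abs_nonneg K) hJabs
  have hAlip : ∀ u v : ℝ, |A u - A v| ≤ ρ * |u - v| := by
    intro u v; rw [hA u, hA v, hρ]; exact aux_A_lip J u v
  have hAbd : ∀ u : ℝ, |A u| ≤ |J| := by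
    intro u; rw [hA u]; exact aux_A_bd J u
  have hWbd : ∀ (y : ℕ → ℝ), (∀ i, y i = 1 ∨ y i = -1) → ∀ (m i : ℕ), |W y m i| ≤ R := by
    intro y hy m i
    rw [hR]
    rcases le_or_gt i m with him | him
    · rw [hWrec y m i him]
      have h1 : |y i| = 1 := by rcases hy i with h | h <;> rw [h] <;> norm_num
      calc |K * y i + A (W y m (i+1))| ≤ |K * y i| + |A (W y m (i+1))| := abs_add_le _ _
        _ = |K| + |A (W y m (i+1))| := by rw [abs_mul, h1, mul_one]
        _ ≤ |K| + |J| := by linarith [hAbd (W y m (i+1))]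
    · rw [hW0 y m i him]
      simp only [abs_zero]
      positivity
  have hwbd : ∀ (y : ℕ → ℝ), (∀ i, y i = 1 ∨ y i = -1) → ∀ i, |wlim y i| ≤ R := by
    intro y hy i
    exact le_of_tendsto ((hwlim y i).abs) (Filter.Eventually.of_forall fun m => hWbd y hy m i)
  have key : ∀ (y yt : ℕ → ℝ), (∀ i, y i = 1 ∨ y i = -1) → (∀ i, yt i = 1 ∨ yt i = -1) →
      ∀ n : ℕ, (∀ i < n, y i = yt i) →
      ∀ j k m : ℕ, k + j = n → |W y m k - W yt m k| ≤ (2 * R) * ρ ^ j := by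
    intro y yt hy hyt n hag j
    induction j with
    | zero =>
      intro k m hk
      simp only [pow_zero, mul_one]
      calc |W y m k - W yt m k| ≤ |W y m k| + |W yt m k| := abs_sub _ _
        _ ≤ R + R := add_le_add (hWbd y hy m k) (hWbd yt hyt m k)
        _ = 2 * R := by ring
    | succ j ih =>
      intro k m hk
      have hkn : k < n := by omega
      rcases le_or_gt k m with hkm | hkm
      · have e : K * y k + A (W y m (k+1)) - (K * yt k + A (W yt m (k+1)))
            = A (W y m (k+1)) - A (W yt m (k+1)) := by rw [hag k hkn]; ring
        rw [hWrec y m k hkm, hWrec yt m k hkm, e]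
        calc |A (W y m (k+1)) - A (W yt m (k+1))|
            ≤ ρ * |W y m (k+1) - W yt m (k+1)| := hAlip _ _
          _ ≤ ρ * ((2*R) * ρ ^ j) :=
              mul_le_mul_of_nonneg_left (ih (k+1) m (by omega)) hρ0.le
          _ = (2*R) * ρ ^ (j+1) := by ring
      · rw [hW0 y m k hkm, hW0 yt m k hkm]
        simp only [sub_zero, sub_self, abs_zero]
        positivity
  have keylim : ∀ (y yt : ℕ → ℝ), (∀ i, y i = 1 ∨ y i = -1) → (∀ i, yt i = 1 ∨ yt i = -1) →
      ∀ n : ℕ, (∀ i < n, y i = yt i) →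
      ∀ j k : ℕ, k + j = n → |wlim y k - wlim yt k| ≤ (2 * R) * ρ ^ j := by
    intro y yt hy hyt n hag j k hk
    exact le_of_tendsto (((hwlim y k).sub (hwlim yt k)).abs)
      (Filter.Eventually.of_forall fun m => key y yt hy hyt n hag j k m hk)
  have hBsplit : ∀ u : ℝ, B u = (1/2:ℝ) * (Real.log 4 + Real.log (Real.cosh (u + J))
      + Real.log (Real.cosh (u - J))) := by
    intro u
    rw [hB u, Real.log_mul (by positivity) (ne_of_gt (Real.cosh_pos _)),
      Real.log_mul (by norm_num) (ne_of_gt (Real.cosh_pos _))]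
  obtain ⟨cB, hcB⟩ : ∃ cB, cB = Real.log 2 + R + |J| := ⟨_, rfl⟩
  have hBle : ∀ u : ℝ, |u| ≤ R → B u ≤ cB := by
    intro u hu
    rw [hBsplit u, hcB]
    have h1 : Real.log (Real.cosh (u + J)) ≤ R + |J| := by
      calc Real.log (Real.cosh (u + J)) ≤ |u + J| := aux_log_cosh_le _
        _ ≤ |u| + |J| := abs_add_le _ _
        _ ≤ R + |J| := by linarith
    have h2 : Real.log (Real.cosh (u - J)) ≤ R + |J| := by
      calc Real.log (Real.cosh (u - J)) ≤ |u - J| := aux_log_cosh_le _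
        _ ≤ |u| + |J| := abs_sub _ _
        _ ≤ R + |J| := by linarith
    have h4 : Real.log 4 = 2 * Real.log 2 := by
      rw [show (4:ℝ) = 2^2 by norm_num, Real.log_pow]
      push_cast; ring
    linarith
  have hBlip : ∀ u v : ℝ, |B u - B v| ≤ |u - v| := by
    intro u v
    rw [hBsplit u, hBsplit v]
    have h1 := aux_log_cosh_lip (u + J) (v + J)
    have h2 := aux_log_cosh_lip (u - J) (v - J)
    rw [show (u+J) - (v+J) = u - v by ring] at h1
    rw [show (u-J) - (v-J) = u - v by ring] at h2
    have e : (1/2:ℝ) * (Real.log 4 + Real.log (Real.cosh (u+J)) + Real.log (Real.cosh (u-J)))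
        - (1/2:ℝ) * (Real.log 4 + Real.log (Real.cosh (v+J)) + Real.log (Real.cosh (v-J)))
        = (1/2:ℝ) * ((Real.log (Real.cosh (u+J)) - Real.log (Real.cosh (v+J)))
          + (Real.log (Real.cosh (u-J)) - Real.log (Real.cosh (v-J)))) := by ring
    rw [e, abs_mul, show |(1/2:ℝ)| = 1/2 by norm_num]
    have h3 := abs_add_le (Real.log (Real.cosh (u+J)) - Real.log (Real.cosh (v+J)))
      (Real.log (Real.cosh (u-J)) - Real.log (Real.cosh (v-J)))
    linarith
  obtain ⟨E, hE⟩ : ∃ E, E = Real.exp cB := ⟨_, rfl⟩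
  have hE0 : 0 < E := hE ▸ Real.exp_pos _
  have hexpB : ∀ u : ℝ, |u| ≤ R → Real.exp (B u) ≤ E := fun u hu =>
    hE ▸ Real.exp_le_exp.2 (hBle u hu)
  obtain ⟨L, hL⟩ : ∃ L, L = 2 * E * Real.exp (4 * R) := ⟨_, rfl⟩
  have hL0 : 0 < L := by rw [hL]; positivity
  have hcoshR : ∀ t : ℝ, |t| ≤ R → Real.cosh t ≤ Real.exp R := by
    intro t ht
    calc Real.cosh t ≤ Real.cosh 0 * Real.exp |t - 0| := aux_cosh_le t 0
      _ = Real.exp |t| := by rw [Real.cosh_zero, one_mul, sub_zero]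
      _ ≤ Real.exp R := Real.exp_le_exp.2 ht
  have hdc : ∀ x z : ℝ, |x| ≤ R → |z| ≤ R →
      |Real.cosh x - Real.cosh z| ≤ Real.exp (3*R) * |x - z| := by
    intro x z hx hz
    have h2 : |x - z| ≤ 2*R := by
      calc |x - z| ≤ |x| + |z| := abs_sub _ _
        _ ≤ 2*R := by linarith
    have h3 : Real.exp |x - z| ≤ Real.exp (2*R) := Real.exp_le_exp.2 h2
    have h4 : Real.cosh z ≤ Real.exp R := hcoshR z hz
    calc |Real.cosh x - Real.cosh z| ≤ Real.cosh z * Real.exp |x - z| * |x - z| :=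
          aux_cosh_lip x z
      _ ≤ Real.exp R * Real.exp (2*R) * |x - z| := by
          have h5 := abs_nonneg (x - z)
          have h7 := Real.exp_pos (|x - z|)
          have h8 := Real.exp_pos R
          exact mul_le_mul_of_nonneg_right (mul_le_mul h4 h3 h7.le h8.le) h5
      _ = Real.exp (3*R) * |x - z| := by rw [← Real.exp_add]; ring_nf
  have hPhi : ∀ a0 a1 b0 b1 : ℝ, |a0| ≤ R → |a1| ≤ R → |b0| ≤ R → |b1| ≤ R →
      |Real.cosh a0 * Real.exp (B a1) / Real.cosh a1
        - Real.cosh b0 * Real.exp (B b1) / Real.cosh b1|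
      ≤ L * (|a0 - b0| + |a1 - b1|) := by
    intro a0 a1 b0 b1 ha0 ha1 hb0 hb1
    have hca1 := Real.cosh_pos a1
    have hcb1 := Real.cosh_pos b1
    have hcb0 := Real.cosh_pos b0
    have h1a1 := Real.one_le_cosh a1
    have h1b1 := Real.one_le_cosh b1
    have hd0 : (0:ℝ) ≤ |a0 - b0| := abs_nonneg _
    have hd1 : (0:ℝ) ≤ |a1 - b1| := abs_nonneg _
    have t1 : |Real.cosh a0 - Real.cosh b0| ≤ Real.exp (3*R) * |a0 - b0| := hdc a0 b0 ha0 hb0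
    have t2 : |Real.exp (B a1) - Real.exp (B b1)| ≤ E * |a1 - b1| := by
      calc |Real.exp (B a1) - Real.exp (B b1)| ≤ Real.exp cB * |B a1 - B b1| :=
            aux_exp_lip (hBle a1 ha1) (hBle b1 hb1)
        _ ≤ E * |a1 - b1| := by
            rw [hE]
            exact mul_le_mul_of_nonneg_left (hBlip a1 b1) (Real.exp_pos cB).le
    have t3 : |1/Real.cosh a1 - 1/Real.cosh b1| ≤ Real.exp (3*R) * |a1 - b1| := by
      have e : 1/Real.cosh a1 - 1/Real.cosh b1
          = (Real.cosh b1 - Real.cosh a1) / (Real.cosh a1 * Real.cosh b1) := by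
        field_simp
      rw [e, abs_div, abs_of_pos (by positivity : (0:ℝ) < Real.cosh a1 * Real.cosh b1)]
      have h2 : (1:ℝ) ≤ Real.cosh a1 * Real.cosh b1 := by nlinarith
      calc |Real.cosh b1 - Real.cosh a1| / (Real.cosh a1 * Real.cosh b1)
          ≤ |Real.cosh b1 - Real.cosh a1| := div_le_self (abs_nonneg _) h2
        _ ≤ Real.exp (3*R) * |a1 - b1| := by rw [abs_sub_comm]; exact hdc a1 b1 ha1 hb1
    have decomp : Real.cosh a0 * Real.exp (B a1) / Real.cosh a1
        - Real.cosh b0 * Real.exp (B b1) / Real.cosh b1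
        = (Real.cosh a0 - Real.cosh b0) * (Real.exp (B a1) / Real.cosh a1)
        + Real.cosh b0 * ((Real.exp (B a1) - Real.exp (B b1)) * (1 / Real.cosh a1))
        + Real.cosh b0 * Real.exp (B b1) * (1 / Real.cosh a1 - 1 / Real.cosh b1) := by
      field_simp
      ring
    have f1 : |Real.exp (B a1) / Real.cosh a1| ≤ E := by
      rw [abs_of_pos (by positivity)]
      calc Real.exp (B a1) / Real.cosh a1 ≤ Real.exp (B a1) :=
            div_le_self (Real.exp_pos _).le h1a1
        _ ≤ E := hexpB a1 ha1
    have f2 : Real.cosh b0 ≤ Real.exp R := hcoshR b0 hb0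
    have f3 : Real.exp (B b1) ≤ E := hexpB b1 hb1
    have finv : |1 / Real.cosh a1| ≤ 1 := by
      rw [abs_of_pos (by positivity)]
      rw [div_le_one hca1]
      exact h1a1
    have g1 : |(Real.cosh a0 - Real.cosh b0) * (Real.exp (B a1) / Real.cosh a1)|
        ≤ (Real.exp (3*R) * |a0 - b0|) * E := by
      rw [abs_mul]
      exact mul_le_mul t1 f1 (abs_nonneg _) (by positivity)
    have g2 : |Real.cosh b0 * ((Real.exp (B a1) - Real.exp (B b1)) * (1 / Real.cosh a1))|
        ≤ Real.exp R * (E * |a1 - b1|) := by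
      rw [abs_mul, abs_of_pos hcb0, abs_mul]
      have inner : |Real.exp (B a1) - Real.exp (B b1)| * |1 / Real.cosh a1|
          ≤ (E * |a1 - b1|) * 1 :=
        mul_le_mul t2 finv (abs_nonneg _) (by positivity)
      rw [mul_one] at inner
      exact mul_le_mul f2 inner (by positivity) (Real.exp_pos R).le
    have g3 : |Real.cosh b0 * Real.exp (B b1) * (1 / Real.cosh a1 - 1 / Real.cosh b1)|
        ≤ (Real.exp R * E) * (Real.exp (3*R) * |a1 - b1|) := by
      rw [abs_mul]
      have hh : |Real.cosh b0 * Real.exp (B b1)| ≤ Real.exp R * E := by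
        rw [abs_mul, abs_of_pos hcb0, abs_of_pos (Real.exp_pos _)]
        exact mul_le_mul f2 f3 (Real.exp_pos _).le (Real.exp_pos R).le
      exact mul_le_mul hh t3 (abs_nonneg _) (by positivity)
    have tri : |Real.cosh a0 * Real.exp (B a1) / Real.cosh a1
        - Real.cosh b0 * Real.exp (B b1) / Real.cosh b1|
        ≤ |(Real.cosh a0 - Real.cosh b0) * (Real.exp (B a1) / Real.cosh a1)|
        + |Real.cosh b0 * ((Real.exp (B a1) - Real.exp (B b1)) * (1 / Real.cosh a1))|
        + |Real.cosh b0 * Real.exp (B b1) * (1 / Real.cosh a1 - 1 / Real.cosh b1)| := by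
      rw [decomp]
      exact (abs_add_le _ _).trans (add_le_add_left (abs_add_le _ _) _)
    have hm : Real.exp R * Real.exp (3*R) = Real.exp (4*R) := by
      rw [← Real.exp_add]; ring_nf
    have h34 : Real.exp (3*R) ≤ Real.exp (4*R) := Real.exp_le_exp.2 (by linarith)
    have h14 : Real.exp R ≤ Real.exp (4*R) := Real.exp_le_exp.2 (by linarith)
    have he4 := Real.exp_pos (4*R)
    have heR := Real.exp_pos R
    have b1' : (Real.exp (3*R) * |a0 - b0|) * E ≤ E * Real.exp (4*R) * |a0 - b0| := by
      calc (Real.exp (3*R) * |a0 - b0|) * E = E * Real.exp (3*R) * |a0 - b0| := by ring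
        _ ≤ E * Real.exp (4*R) * |a0 - b0| :=
            mul_le_mul_of_nonneg_right (mul_le_mul_of_nonneg_left h34 hE0.le) hd0
    have b2' : Real.exp R * (E * |a1 - b1|) ≤ E * Real.exp (4*R) * |a1 - b1| := by
      calc Real.exp R * (E * |a1 - b1|) = E * Real.exp R * |a1 - b1| := by ring
        _ ≤ E * Real.exp (4*R) * |a1 - b1| :=
            mul_le_mul_of_nonneg_right (mul_le_mul_of_nonneg_left h14 hE0.le) hd1
    have b3' : (Real.exp R * E) * (Real.exp (3*R) * |a1 - b1|)
        = E * Real.exp (4*R) * |a1 - b1| := by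
      rw [← hm]; ring
    rw [hL]
    linarith [tri, g1, g2, g3, b1', b2', b3',
      mul_nonneg (mul_nonneg hE0.le he4.le) hd0,
      mul_nonneg (mul_nonneg hE0.le he4.le) hd1]
  refine ⟨(1/lam) * L * (2*R + 2*R/ρ) + 1, ?_, ρ, ⟨hρ0, hρ1⟩, ?_⟩
  · have h1 : 0 < 1/lam := one_div_pos.mpr hlam0
    have h2 : (0:ℝ) ≤ 2*R + 2*R/ρ := by
      have := div_nonneg (by linarith : (0:ℝ) ≤ 2*R) hρ0.le
      linarith
    nlinarith [mul_nonneg (mul_nonneg h1.le hL0.le) h2]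
  intro y yt hy hyt n hag
  have hρn : (0:ℝ) < ρ ^ n := pow_pos hρ0 n
  have hd0 : |wlim y 0 - wlim yt 0| ≤ (2*R) * ρ ^ n := keylim y yt hy hyt n hag n 0 (by omega)
  have hd1 : |wlim y 1 - wlim yt 1| ≤ (2*R/ρ) * ρ ^ n := by
    cases n with
    | zero =>
      simp only [pow_zero, mul_one]
      have h1 := hwbd y hy 1
      have h2 := hwbd yt hyt 1
      have h3 : |wlim y 1 - wlim yt 1| ≤ 2*R := by
        calc |wlim y 1 - wlim yt 1| ≤ |wlim y 1| + |wlim yt 1| := abs_sub _ _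
          _ ≤ 2*R := by linarith
      calc |wlim y 1 - wlim yt 1| ≤ 2*R := h3
        _ ≤ 2*R/ρ := by
            rw [le_div_iff₀ hρ0]
            nlinarith
    | succ m =>
      calc |wlim y 1 - wlim yt 1| ≤ (2*R) * ρ ^ m := keylim y yt hy hyt (m+1) hag m 1 (by omega)
        _ = (2*R/ρ) * ρ ^ (m+1) := by
            field_simp
            ring
  have hgdiff : g y - g yt = (1/lam) * (Real.cosh (wlim y 0) * Real.exp (B (wlim y 1))
      / Real.cosh (wlim y 1) - Real.cosh (wlim yt 0) * Real.exp (B (wlim yt 1))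
      / Real.cosh (wlim yt 1)) := by
    rw [hg y, hg yt]; ring
  rw [hgdiff, abs_mul, abs_of_pos (by positivity : (0:ℝ) < 1/lam)]
  have hPhiB := hPhi (wlim y 0) (wlim y 1) (wlim yt 0) (wlim yt 1)
    (hwbd y hy 0) (hwbd y hy 1) (hwbd yt hyt 0) (hwbd yt hyt 1)
  have h1 : 0 < 1/lam := one_div_pos.mpr hlam0
  calc (1/lam) * |Real.cosh (wlim y 0) * Real.exp (B (wlim y 1)) / Real.cosh (wlim y 1)
        - Real.cosh (wlim yt 0) * Real.exp (B (wlim yt 1)) / Real.cosh (wlim yt 1)|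
      ≤ (1/lam) * (L * (|wlim y 0 - wlim yt 0| + |wlim y 1 - wlim yt 1|)) :=
        mul_le_mul_of_nonneg_left hPhiB h1.le
    _ ≤ (1/lam) * (L * ((2*R) * ρ ^ n + (2*R/ρ) * ρ ^ n)) := by
        apply mul_le_mul_of_nonneg_left _ h1.le
        exact mul_le_mul_of_nonneg_left (add_le_add hd0 hd1) hL0.le
    _ = ((1/lam) * L * (2*R + 2*R/ρ)) * ρ ^ n := by ring
    _ ≤ ((1/lam) * L * (2*R + 2*R/ρ) + 1) * ρ ^ n := by nlinarith
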